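/- For every z ∈ [0,1] and every μ ∈ [0, 1/(e−1)]: ((e−1)/e) · ( z − (1 − e^{−z}) μ ) / ( 1 − (1 − e^{−1}) μ ) − ( e^{z−1} − e^{−1} ) ≥ 0. (Note that the denominator 1 − (1 − e^{−1})μ is positive for such μ.) -/

import Mathlib

open Real

noncomputable def rsGfun (t : ℝ) : ℝ :=
  t + Real.exp (-1) - Real.exp (t - 1) - (1 - Real.exp (-t)) / (Real.exp 1 - 1)

noncomputable def rsPhi (t : ℝ) : ℝ :=
  1 - Real.exp (-t) / (Real.exp 1 - 1) - Real.exp (t - 1)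

lemma rsE_gt : (2.7182818283 : ℝ) < Real.exp 1 := Real.exp_one_gt_d9

lemma rsE_pos : (0 : ℝ) < Real.exp 1 := Real.exp_pos 1

lemma rsE1_pos : (0 : ℝ) < Real.exp 1 - 1 := by linarith [rsE_gt]

lemma rsGfun_hasDeriv (x : ℝ) : HasDerivAt rsGfun (rsPhi x) x := by
  have h2 : HasDerivAt (fun t : ℝ => Real.exp (t - 1)) (Real.exp (x - 1)) x := by
    simpa [Function.comp_def] using (Real.hasDerivAt_exp (x - 1)).comp x ((hasDerivAt_id x).sub_const 1)
  have h3 : HasDerivAt (fun t : ℝ => Real.exp (-t)) (-Real.exp (-x)) x := by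
    simpa [Function.comp_def] using (Real.hasDerivAt_exp (-x)).comp x (hasDerivAt_id x).neg
  have h4 : HasDerivAt (fun t : ℝ => (1 - Real.exp (-t)) / (Real.exp 1 - 1))
      ((0 - -Real.exp (-x)) / (Real.exp 1 - 1)) x :=
    ((hasDerivAt_const x (1:ℝ)).sub h3).div_const _
  have h := (((hasDerivAt_id x).add_const (Real.exp (-1))).sub h2).sub h4
  refine h.congr_deriv ?_
  unfold rsPhi
  ring

lemma rsGfun_cont : Continuous rsGfun := by
  unfold rsGfun; fun_prop

/-- concavity of `rsPhi`: it is at least the min of its values at two surrounding points. -/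
lemma rsPhi_min {u v t : ℝ} (hu : u ≤ t) (hv : t ≤ v) :
    min (rsPhi u) (rsPhi v) ≤ rsPhi t := by
  have key : ∀ a b : ℝ, 0 ≤ a → 0 ≤ b → a + b = 1 → a * u + b * v = t →
      min (rsPhi u) (rsPhi v) ≤ rsPhi t := by
    intro a b ha hb hab habt
    have he1 : Real.exp (-t) ≤ a * Real.exp (-u) + b * Real.exp (-v) := by
      have h := convexOn_exp.2 (Set.mem_univ (-u)) (Set.mem_univ (-v)) ha hb hab
      simp only [smul_eq_mul] at h
      have harg : a * -u + b * -v = -t := by rw [← habt]; ring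
      rwa [harg] at h
    have he2 : Real.exp (t - 1) ≤ a * Real.exp (u - 1) + b * Real.exp (v - 1) := by
      have h := convexOn_exp.2 (Set.mem_univ (u - 1)) (Set.mem_univ (v - 1)) ha hb hab
      simp only [smul_eq_mul] at h
      have harg : a * (u - 1) + b * (v - 1) = t - 1 := by linear_combination habt - hab
      rwa [harg] at h
    have hc : (0:ℝ) < (Real.exp 1 - 1) := rsE1_pos
    have hkey : a * rsPhi u + b * rsPhi v ≤ rsPhi t := by
      unfold rsPhi
      have hd1 : Real.exp (-t) / (Real.exp 1 - 1)
          ≤ (a * Real.exp (-u) + b * Real.exp (-v)) / (Real.exp 1 - 1) :=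
        (div_le_div_iff_of_pos_right hc).mpr he1
      have expand : a * (1 - Real.exp (-u) / (Real.exp 1 - 1) - Real.exp (u - 1))
          + b * (1 - Real.exp (-v) / (Real.exp 1 - 1) - Real.exp (v - 1))
          = (a + b) - (a * Real.exp (-u) + b * Real.exp (-v)) / (Real.exp 1 - 1)
            - (a * Real.exp (u - 1) + b * Real.exp (v - 1)) := by
        field_simp
        ring
      rw [expand, hab]
      linarith
    have hmin : min (rsPhi u) (rsPhi v) ≤ a * rsPhi u + b * rsPhi v := by
      rcases min_cases (rsPhi u) (rsPhi v) with ⟨hm, hle⟩ | ⟨hm, hle⟩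
      · rw [hm]
        have haa : a = 1 - b := by linarith
        rw [haa]
        nlinarith [mul_nonneg hb (sub_nonneg.2 hle)]
      · rw [hm]
        have hbb : b = 1 - a := by linarith
        rw [hbb]
        nlinarith [mul_nonneg ha (sub_nonneg.2 hle.le)]
    linarith
  rcases eq_or_lt_of_le (hu.trans hv) with h | h
  · have h1 : u = t := le_antisymm hu (by linarith)
    subst h1
    exact min_le_left _ _
  · have hvu : (0:ℝ) < v - u := by linarith
    refine key ((v - t) / (v - u)) ((t - u) / (v - u))
      (div_nonneg (by linarith) hvu.le) (div_nonneg (by linarith) hvu.le) ?_ ?_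
    · field_simp
      ring
    · rw [div_mul_eq_mul_div, div_mul_eq_mul_div, ← add_div,
        div_eq_iff (ne_of_gt hvu)]
      ring

lemma rsPhi_zero_pos : 0 < rsPhi 0 := by
  unfold rsPhi
  have h1 : Real.exp (-0 : ℝ) = 1 := by norm_num
  have h2 : Real.exp ((0:ℝ) - 1) = (Real.exp 1)⁻¹ := by
    rw [show (0:ℝ) - 1 = -1 by norm_num, Real.exp_neg]
  rw [h1, h2]
  have hE := rsE_gt
  have h3 : 1 / (Real.exp 1 - 1) ≤ 1 / 1.7 := by
    apply one_div_le_one_div_of_le <;> linarith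
  have h4 : (Real.exp 1)⁻¹ ≤ 1 / 2.7 := by
    rw [inv_eq_one_div]
    apply one_div_le_one_div_of_le <;> linarith
  have : Real.exp 0 / (Real.exp 1 - 1) = 1 / (Real.exp 1 - 1) := by
    rw [Real.exp_zero]
  nlinarith [rsE1_pos]

lemma rsGfun_zero : rsGfun 0 = 0 := by
  unfold rsGfun
  norm_num

lemma rsGfun_one : rsGfun 1 = 0 := by
  unfold rsGfun
  have h1 : Real.exp ((1:ℝ) - 1) = 1 := by norm_num
  rw [h1, Real.exp_neg]
  have hEpos := rsE_pos
  have hE1 := rsE1_pos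
  field_simp
  ring

lemma rsGfun_nonneg {z : ℝ} (hz0 : 0 ≤ z) (hz1 : z ≤ 1) : 0 ≤ rsGfun z := by
  by_cases hc : 0 ≤ rsPhi z
  · have hmono : MonotoneOn rsGfun (Set.Icc 0 z) := by
      apply monotoneOn_of_deriv_nonneg (convex_Icc 0 z) rsGfun_cont.continuousOn
      · exact fun x _ => (rsGfun_hasDeriv x).differentiableAt.differentiableWithinAt
      · intro x hx
        rw [interior_Icc] at hx
        rw [(rsGfun_hasDeriv x).deriv]
        exact le_trans (le_min rsPhi_zero_pos.le hc) (rsPhi_min hx.1.le hx.2.le)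
    have := hmono ⟨le_refl 0, hz0⟩ ⟨hz0, le_refl z⟩ hz0
    rwa [rsGfun_zero] at this
  · push_neg at hc
    have hanti : AntitoneOn rsGfun (Set.Icc z 1) := by
      apply antitoneOn_of_deriv_nonpos (convex_Icc z 1) rsGfun_cont.continuousOn
      · exact fun x _ => (rsGfun_hasDeriv x).differentiableAt.differentiableWithinAt
      · intro x hx
        rw [interior_Icc] at hx
        rw [(rsGfun_hasDeriv x).deriv]
        by_contra hpos
        push_neg at hpos
        have := rsPhi_min hz0 hx.1.le
        have : min (rsPhi 0) (rsPhi x) ≤ rsPhi z := rsPhi_min hz0 hx.1.le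
        have hm : 0 < min (rsPhi 0) (rsPhi x) := lt_min rsPhi_zero_pos hpos
        linarith
    have := hanti ⟨le_refl z, hz1⟩ ⟨hz1, le_refl 1⟩ hz1
    rwa [rsGfun_one] at this

/-- The inequality `(★)` in the proof of Lemma `left` of the Ranking
analysis. -/
theorem ranking_star_inequality :
    ∀ z ∈ Set.Icc (0 : ℝ) 1, ∀ μ ∈ Set.Icc (0 : ℝ) (1 / (Real.exp 1 - 1)),
      (Real.exp 1 - 1) / Real.exp 1
          * ((z - (1 - Real.exp (-z)) * μ) / (1 - (1 - Real.exp (-1)) * μ))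
        - (Real.exp (z - 1) - Real.exp (-1)) ≥ 0 := by
  intro z hz μ hμ
  obtain ⟨hz0, hz1⟩ := hz
  obtain ⟨hμ0, hμ1⟩ := hμ
  set E := Real.exp 1 with hE_def
  have hE := rsE_gt
  have hEpos : (0:ℝ) < E := rsE_pos
  have hE1 : (0:ℝ) < E - 1 := rsE1_pos
  have hinv : Real.exp (-1 : ℝ) = E⁻¹ := by rw [Real.exp_neg]
  set p := Real.exp (-z) with hp_def
  set q := Real.exp (z - 1) with hq_def
  -- chord inequality (μ = 0 endpoint)
  have h0 : 0 ≤ (E - 1) * z - E * q + 1 := by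
    have hconv := convexOn_exp.2 (Set.mem_univ (0:ℝ)) (Set.mem_univ (1:ℝ))
      (by linarith : (0:ℝ) ≤ 1 - z) (by linarith : (0:ℝ) ≤ z) (by ring)
    simp only [smul_eq_mul, mul_zero, mul_one, zero_add, Real.exp_zero] at hconv
    have hq' : q = Real.exp z / E := by
      rw [hq_def, hE_def, ← Real.exp_sub]
    rw [hq']
    have : Real.exp z ≤ (1 - z) + z * E := hconv
    field_simp
    nlinarith
  -- μ = 1/(E-1) endpoint : from rsGfun_nonneg
  have hG : 0 ≤ E * (E - 1) * z - E * (1 - p) - E * (E - 1) * q + (E - 1) := by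
    have hg := rsGfun_nonneg hz0 hz1
    unfold rsGfun at hg
    rw [hinv] at hg
    have hgE : 0 ≤ (E - 1) * E * (z + E⁻¹ - q - (1 - p) / (E - 1)) := by
      exact mul_nonneg (by positivity) hg
    have hexpand : (E - 1) * E * (z + E⁻¹ - q - (1 - p) / (E - 1))
        = E * (E - 1) * z - E * (1 - p) - E * (E - 1) * q + (E - 1) := by
      field_simp
      ring
    rwa [hexpand] at hgE
  -- denominator positive
  have hμE : μ * (E - 1) ≤ 1 := by
    have := mul_le_mul_of_nonneg_right hμ1 hE1.le
    rwa [div_mul_cancel₀] at this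
    exact ne_of_gt hE1
  have hD : 0 < 1 - (1 - Real.exp (-1)) * μ := by
    rw [hinv]
    have h1 : (1 - E⁻¹) * μ ≤ (1 - E⁻¹) * (1 / (E - 1)) := by
      apply mul_le_mul_of_nonneg_left hμ1
      have : E⁻¹ < 1 := by
        rw [inv_lt_one_iff₀]; right; linarith
      linarith
    have h2 : (1 - E⁻¹) * (1 / (E - 1)) = E⁻¹ := by
      field_simp
    have h3 : E⁻¹ < 1 := by rw [inv_lt_one_iff₀]; right; linarith
    linarith
  -- key numerator inequality
  have key : 0 ≤ E * (E - 1) * (z - (1 - p) * μ) - (E * q - 1) * (E - (E - 1) * μ) := by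
    nlinarith [mul_nonneg (by linarith : (0:ℝ) ≤ 1 - μ * (E - 1)) (mul_nonneg hEpos.le h0),
      mul_nonneg hμ0 hG]
  have hEE : E * E⁻¹ = 1 := mul_inv_cancel₀ hEpos.ne'
  rw [ge_iff_le, ← sub_nonneg, sub_zero, hinv]
  have hD' : 0 < 1 - (1 - E⁻¹) * μ := by rw [← hinv]; exact hD
  have step : (E - 1) / E * ((z - (1 - p) * μ) / (1 - (1 - E⁻¹) * μ))
      = ((E - 1) * (z - (1 - p) * μ)) / (E * (1 - (1 - E⁻¹) * μ)) :=
    div_mul_div_comm _ _ _ _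
  rw [step, sub_nonneg, le_div_iff₀ (by positivity)]
  have expand : (q - E⁻¹) * (E * (1 - (1 - E⁻¹) * μ))
      = (E * q - 1) * (E - (E - 1) * μ) / E := by
    rw [eq_div_iff hEpos.ne']
    linear_combination (E * q * μ - E + E * μ - μ * (E * E⁻¹ + 1)) * hEE
  rw [expand, div_le_iff₀ hEpos]
  nlinarith [key]
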